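/- A subshift X ⊆ Σ^ℤ has a g-function if and only if there exists n ∈ ℕ such that the n-block system X^[n] of X is right instantaneous. -/

import Mathlib

open Set Filter Topology
set_option linter.unusedSectionVars false
set_option linter.unusedVariables false
set_option maxHeartbeats 1000000

/-! Basic symbolic dynamics notions.

* The alphabet is a nonempty finite type `A` with the discrete topology; `A^ℤ` and `A^ℕ`
  carry the product topology.
* A left-infinite sequence `x⁻ = (x_i)_{i ≤ 0}` is encoded as `u : ℕ → A` with `u n = x (-n)`.
* Finite words are lists, read left to right.
-/

/-- The shift `S`. -/
def shiftMap {A : Type*} (x : ℤ → A) : ℤ → A := fun i => x (i + 1)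

/-- A subshift: a nonempty closed shift-invariant subset of `A^ℤ`. -/
def IsSubshift {A : Type*} [TopologicalSpace A] (X : Set (ℤ → A)) : Prop :=
  X.Nonempty ∧ IsClosed X ∧ shiftMap '' X = X

/-- `X⁻`: the left-infinite rays of points of `X` (encoded via `u n = x (-n)`). -/
def Xminus {A : Type*} (X : Set (ℤ → A)) : Set (ℕ → A) :=
  {u | ∃ x ∈ X, ∀ n : ℕ, u n = x (-(n : ℤ))}

/-- The word `w` occurs in `x` (as a block of consecutive coordinates). -/
def Occurs {A : Type*} (w : List A) (x : ℤ → A) : Prop :=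
  ∃ i : ℤ, ∀ j : Fin w.length, x (i + ((j : ℕ) : ℤ)) = w.get j

/-- A finite word is admissible for `X` if it occurs in some point of `X`. -/
def Admissible {A : Type*} (X : Set (ℤ → A)) (w : List A) : Prop :=
  ∃ x ∈ X, Occurs w x

/-- The left ray `u` ends in the word `w`, i.e. `(x_{-k},…,x_0) = w` where `|w| = k+1`. -/
def EndsIn {A : Type*} (u : ℕ → A) (w : List A) : Prop :=
  ∀ j : Fin w.length, u (w.length - 1 - (j : ℕ)) = w.get j

/-- `Γ₁⁺(x⁻)`: the letters that can follow the left ray `u` in `X`. -/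
def Gamma1 {A : Type*} (X : Set (ℤ → A)) (u : ℕ → A) : Set A :=
  {σ | ∃ x ∈ X, (∀ n : ℕ, x (-(n : ℤ)) = u n) ∧ x 1 = σ}

/-- `x` carries the word `b` on the coordinate interval `[-(|b| - 1), 0]`. -/
def EndsAtZero {A : Type*} (x : ℤ → A) (b : List A) : Prop :=
  ∀ j : Fin b.length, x (((j : ℕ) : ℤ) - ((b.length : ℤ) - 1)) = b.get j

/-- `c ∈ ω⁺(b)`: every point of `X` carrying `b` ending at coordinate `0` can be modified
on the positive coordinates so as to continue with the word `c`. -/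
def OmegaWord {A : Type*} (X : Set (ℤ → A)) (b c : List A) : Prop :=
  ∀ x ∈ X, EndsAtZero x b →
    ∃ x' ∈ X, (∀ i : ℤ, i ≤ 0 → x' i = x i) ∧
      ∀ j : Fin c.length, x' (((j : ℕ) : ℤ) + 1) = c.get j

/-- `ω₁⁺(b)`. -/
def omega1 {A : Type*} (X : Set (ℤ → A)) (b : List A) : Set A :=
  {σ | OmegaWord X b [σ]}

/-- The word `(x_{-n},…,x_0)` read off the left ray `u`. -/
def lastWord {A : Type*} (u : ℕ → A) (n : ℕ) : List A :=
  List.ofFn fun j : Fin (n + 1) => u (n - (j : ℕ))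

/-- `Δ₁⁺(x⁻) = ⋃ₙ ω₁⁺((x_{-n},…,x_0))`. -/
def Delta1 {A : Type*} (X : Set (ℤ → A)) (u : ℕ → A) : Set A :=
  ⋃ n : ℕ, omega1 X (lastWord u n)

/-- Property g: `Δ₁⁺(x⁻) ≠ ∅` for every `x⁻ ∈ X⁻`. -/
def PropertyG {A : Type*} (X : Set (ℤ → A)) : Prop :=
  ∀ u ∈ Xminus X, (Delta1 X u).Nonempty

/-- A g-function for `X`, encoded as a total function `g : (ℕ → A) → A → ℝ`:
continuity (of the restriction to the graph of `Γ₁⁺`, i.e. of the map on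
`{(x⁻,σ) : σ ∈ Γ₁⁺(x⁻)}`), values in `[0,1]` there, and the normalization
`∑_{σ ∈ Γ₁⁺(x⁻)} g (x⁻, σ) = 1`. -/
def IsGFunction {A : Type*} [Fintype A] [TopologicalSpace A] (X : Set (ℤ → A))
    (g : (ℕ → A) → A → ℝ) : Prop :=
  ContinuousOn (fun p : (ℕ → A) × A => g p.1 p.2)
      {p : (ℕ → A) × A | p.1 ∈ Xminus X ∧ p.2 ∈ Gamma1 X p.1} ∧
  (∀ u ∈ Xminus X, ∀ σ ∈ Gamma1 X u, g u σ ∈ Set.Icc (0 : ℝ) 1) ∧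
  (∀ u ∈ Xminus X, ∑ σ : A, (Gamma1 X u).indicator (g u) σ = 1)

/-- Property (D): for every admissible word `b` and letter `σ` with `bσ` admissible there
is a word `a` with `ab` admissible and `σ ∈ ω₁⁺(ab)`. -/
def PropertyD {A : Type*} (X : Set (ℤ → A)) : Prop :=
  ∀ (b : List A) (σ : A), b ≠ [] → Admissible X (b ++ [σ]) →
    ∃ a : List A, a ≠ [] ∧ Admissible X (a ++ b) ∧ σ ∈ omega1 X (a ++ b)

/-- The `n`-block map, sending `x` to the sequence of its `n`-blocks. -/
def blockMap {A : Type*} (n : ℕ) (x : ℤ → A) : ℤ → (Fin n → A) :=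
  fun i j => x (i + ((j : ℕ) : ℤ))

/-- The `n`-block system of `X`, a subshift over the alphabet of `n`-blocks. -/
def blockSystem {A : Type*} (X : Set (ℤ → A)) (n : ℕ) : Set (ℤ → (Fin n → A)) :=
  blockMap n '' X

/-- A subshift is right instantaneous if `ω₁⁺(λ) ≠ ∅` for every letter `λ` occurring in
one of its points. -/
def RightInstantaneous {B : Type*} (Y : Set (ℤ → B)) : Prop :=
  ∀ β : B, Admissible Y [β] → (omega1 Y [β]).Nonempty


section Lemmas
variable {A : Type*} [TopologicalSpace A] {X : Set (ℤ → A)}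

lemma shift_mem (hX : IsSubshift X) (k : ℤ) : ∀ x ∈ X, (fun i => x (i + k)) ∈ X := by
  induction k using Int.induction_on with
  | zero => intro x hx; simpa using hx
  | succ n ih =>
      intro x hx
      have h1 : shiftMap (fun i => x (i + (n:ℤ))) ∈ X := by
        rw [← hX.2.2]; exact ⟨_, ih x hx, rfl⟩
      have : (fun i => x (i + ((n:ℤ)+1))) = shiftMap (fun i => x (i + (n:ℤ))) := by
        funext i; simp only [shiftMap]; ring_nf
      rwa [this]
  | pred n ih =>
      intro x hx
      have : x ∈ shiftMap '' X := by rw [hX.2.2]; exact hx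
      obtain ⟨x₀, hx₀, hsx⟩ := this
      have h0 : ∀ j, x₀ j = x (j - 1) := by
        intro j
        have : shiftMap x₀ (j - 1) = x (j-1) := by rw [hsx]
        simpa [shiftMap] using this
      have h1 := ih x₀ hx₀
      have : (fun i => x (i + (-(n:ℤ) - 1))) = (fun i => x₀ (i + (-(n:ℤ)))) := by
        funext i; rw [h0]; ring_nf
      rwa [this]

/-- the left ray of a biinfinite point -/
def ray (x : ℤ → A) : ℕ → A := fun n => x (-(n : ℤ))

lemma ray_mem {x : ℤ → A} (hx : x ∈ X) : ray x ∈ Xminus X := ⟨x, hx, fun n => rfl⟩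

lemma endsAtZero_of_admissible (hX : IsSubshift X) {b : List A} (hb : Admissible X b) :
    ∃ x ∈ X, EndsAtZero x b := by
  obtain ⟨x, hx, i, hi⟩ := hb
  refine ⟨fun t => x (t + (i + ((b.length:ℤ) - 1))), shift_mem hX _ x hx, ?_⟩
  intro j
  have := hi j
  simp only []
  rw [show ((j:ℕ):ℤ) - ((b.length:ℤ) - 1) + (i + ((b.length:ℤ) - 1)) = i + ((j:ℕ):ℤ) by ring]
  exact this

lemma admissible_of_endsAtZero {x : ℤ → A} (hx : x ∈ X) {b : List A}
    (hb : EndsAtZero x b) : Admissible X b := by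
  refine ⟨x, hx, -((b.length:ℤ) - 1), fun j => ?_⟩
  have := hb j
  rwa [show -((b.length:ℤ) - 1) + ((j:ℕ):ℤ) = ((j:ℕ):ℤ) - ((b.length:ℤ) - 1) by ring]

lemma omega1_antitone {b b' : List A}
    (h : ∀ x : ℤ → A, EndsAtZero x b' → EndsAtZero x b) :
    omega1 X b ⊆ omega1 X b' := by
  intro σ hσ x hx hxb'
  exact hσ x hx (h x hxb')

end Lemmas

section Block
variable {A : Type*} [TopologicalSpace A] {X : Set (ℤ → A)}

lemma blockW_to_RI (hX : IsSubshift X) {n : ℕ} (hn : 1 ≤ n)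
    (hW : ∀ b : List A, b.length = n → Admissible X b → (omega1 X b).Nonempty) :
    RightInstantaneous (blockSystem X n) := by
  intro β hβ
  obtain ⟨y, ⟨x, hx, rfl⟩, i, hi⟩ := hβ
  have hxi : ∀ j : Fin n, x (i + (j : ℕ)) = β j := by
    intro j
    have := congrFun (hi ⟨0, by simp⟩) j
    simpa [blockMap] using this
  set b : List A := List.ofFn β with hb
  have hblen : b.length = n := by simp [hb]
  have hbadm : Admissible X b := by
    refine ⟨x, hx, i, fun j => ?_⟩
    rw [List.get_ofFn]
    exact hxi (Fin.cast hblen j)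
  obtain ⟨τ, hτ⟩ := hW b hblen hbadm
  refine ⟨fun j => if h : (j : ℕ) + 1 < n then β ⟨(j:ℕ)+1, h⟩ else τ, ?_⟩
  intro y hy hyβ
  obtain ⟨x₁, hx₁, rfl⟩ := hy
  have hx₁β : ∀ j : Fin n, x₁ ((j : ℕ) : ℤ) = β j := by
    intro j
    have := congrFun (hyβ ⟨0, by simp⟩) j
    simpa [blockMap, EndsAtZero] using this
  set x₀ : ℤ → A := fun i => x₁ (i + ((n:ℤ) - 1)) with hx₀def
  have hx₀ : x₀ ∈ X := shift_mem hX _ x₁ hx₁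
  have hx₀b : EndsAtZero x₀ b := by
    intro j
    simp only [hx₀def, hblen]
    rw [show ((j:ℕ):ℤ) - ((n:ℤ) - 1) + ((n:ℤ) - 1) = ((j:ℕ):ℤ) by ring]
    rw [List.get_ofFn]
    exact hx₁β (Fin.cast hblen j)
  obtain ⟨x', hx', hagree, hone⟩ := hτ x₀ hx₀ hx₀b
  have h1 : x' 1 = τ := by simpa using hone ⟨0, by simp⟩
  set x₂ : ℤ → A := fun i => x' (i + (1 - (n:ℤ))) with hx₂def
  have hx₂ : x₂ ∈ X := shift_mem hX _ x' hx'
  refine ⟨blockMap n x₂, ⟨x₂, hx₂, rfl⟩, ?_, ?_⟩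
  · intro i₀ hi₀
    funext j
    have hj : ((j:ℕ):ℤ) ≤ (n:ℤ) - 1 := by
      have := j.2; omega
    simp only [blockMap, hx₂def]
    have harg : i₀ + ((j:ℕ):ℤ) + (1 - (n:ℤ)) ≤ 0 := by omega
    rw [hagree _ harg]
    simp only [hx₀def]
    rw [show i₀ + ((j:ℕ):ℤ) + (1 - (n:ℤ)) + ((n:ℤ) - 1) = i₀ + ((j:ℕ):ℤ) by ring]
  · intro j
    have hj0 : (j : ℕ) = 0 := by have := j.2; simpa using this
    rw [List.get_eq_getElem, List.getElem_singleton]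
    funext jj
    simp only [blockMap, hx₂def, hj0]
    by_cases h : (jj : ℕ) + 1 < n
    · have harg : ((0:ℕ):ℤ) + 1 + ((jj:ℕ):ℤ) + (1 - (n:ℤ)) ≤ 0 := by
        push_cast; omega
      rw [hagree _ harg]
      simp only [hx₀def]
      rw [show ((0:ℕ):ℤ) + 1 + ((jj:ℕ):ℤ) + (1 - (n:ℤ)) + ((n:ℤ) - 1) = (((jj:ℕ)+1 : ℕ):ℤ) by push_cast; ring]
      rw [dif_pos h]
      exact hx₁β ⟨(jj:ℕ)+1, h⟩
    · have harg : ((0:ℕ):ℤ) + 1 + ((jj:ℕ):ℤ) + (1 - (n:ℤ)) = 1 := by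
        have := jj.2; push_cast; omega
      rw [harg, h1, dif_neg h]

end Block

section BlockA
variable {A : Type*} [TopologicalSpace A] {X : Set (ℤ → A)}

lemma RI_to_blockW (hX : IsSubshift X) {n : ℕ} (hn : 1 ≤ n)
    (hRI : RightInstantaneous (blockSystem X n)) :
    ∀ b : List A, b.length = n → Admissible X b → (omega1 X b).Nonempty := by
  intro b hblen hbadm
  -- get x ∈ X with EndsAtZero x b
  obtain ⟨x, hx, hxb⟩ := endsAtZero_of_admissible hX hbadm
  -- the block β
  set β : Fin n → A := fun j => b.get (Fin.cast hblen.symm j) with hβdef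
  -- [β] is admissible for the block system
  have hβadm : Admissible (blockSystem X n) [β] := by
    refine ⟨blockMap n (fun i => x (i + (1 - (n:ℤ)))),
      ⟨_, shift_mem hX _ x hx, rfl⟩, 0, ?_⟩
    intro j
    have hj0 : (j : ℕ) = 0 := by have := j.2; simpa using this
    rw [List.get_eq_getElem, List.getElem_singleton]
    funext jj
    simp only [blockMap, hj0]
    have hb2 := hxb (Fin.cast hblen.symm jj)
    rw [show (0:ℤ) + ((0:ℕ):ℤ) + ((jj:ℕ):ℤ) + (1 - (n:ℤ)) =
      (((Fin.cast hblen.symm jj : Fin b.length) : ℕ) : ℤ) - ((b.length:ℤ) - 1) by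
        simp [hblen]; push_cast; ring]
    exact hb2
  obtain ⟨σb, hσb⟩ := hRI β hβadm
  refine ⟨σb ⟨n-1, by omega⟩, ?_⟩
  -- prove OmegaWord X b [σb (n-1)]
  intro z hz hzb
  -- shift z so that b sits on [0, n-1]
  set z₀ : ℤ → A := fun i => z (i + (1 - (n:ℤ))) with hz₀def
  have hz₀ : z₀ ∈ X := shift_mem hX _ z hz
  have hyβ : EndsAtZero (blockMap n z₀) [β] := by
    intro j
    have hj0 : (j : ℕ) = 0 := by have := j.2; simpa using this
    rw [List.get_eq_getElem, List.getElem_singleton]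
    funext jj
    simp only [blockMap, hz₀def, hj0]
    have hb2 := hzb (Fin.cast hblen.symm jj)
    rw [show ((0:ℕ):ℤ) - (([(β:Fin n → A)].length:ℤ) - 1) + ((jj:ℕ):ℤ) + (1 - (n:ℤ)) =
      (((Fin.cast hblen.symm jj : Fin b.length) : ℕ) : ℤ) - ((b.length:ℤ) - 1) by
        simp [hblen]; push_cast; ring]
    exact hb2
  obtain ⟨y', hy', hagree, hone⟩ := hσb (blockMap n z₀) ⟨z₀, hz₀, rfl⟩ hyβ
  obtain ⟨w, hw, rfl⟩ := hy'
  have hone1 : ∀ jj : Fin n, w (1 + (jj:ℕ)) = σb jj := by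
    intro jj
    have := congrFun (hone ⟨0, by simp⟩) jj
    simpa [blockMap] using this
  have hagree1 : ∀ m : ℤ, m ≤ (n:ℤ) - 1 → w m = z₀ m := by
    intro m hm
    rcases le_or_gt m 0 with hm0 | hm0
    · have := congrFun (hagree m hm0) ⟨0, by omega⟩
      simpa [blockMap] using this
    · have := congrFun (hagree (m - ((n:ℤ)-1)) (by omega)) ⟨n-1, by omega⟩
      simp only [blockMap] at this
      rw [show m - ((n:ℤ)-1) + ((n-1 : ℕ):ℤ) = m by push_cast; omega] at this
      exact this
  -- final witness
  refine ⟨fun i => w (i + ((n:ℤ) - 1)), shift_mem hX _ w hw, ?_, ?_⟩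
  · intro i hi
    show w (i + ((n:ℤ) - 1)) = z i
    rw [hagree1 (i + ((n:ℤ)-1)) (by omega)]
    simp only [hz₀def]
    rw [show i + ((n:ℤ) - 1) + (1 - (n:ℤ)) = i by ring]
  · intro j
    rw [List.get_eq_getElem, List.getElem_singleton]
    show w ((((j:ℕ):ℤ) + 1) + ((n:ℤ) - 1)) = σb ⟨n-1, by omega⟩
    have hj0 : (j:ℕ) = 0 := by have := j.2; simpa using this
    rw [hj0, show (((0:ℕ):ℤ) + 1) + ((n:ℤ) - 1) = 1 + ((n-1:ℕ):ℤ) by push_cast; omega]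
    exact hone1 ⟨n-1, by omega⟩

end BlockA

section GCon
variable {A : Type*} [Fintype A] [Nonempty A] [TopologicalSpace A] [DiscreteTopology A]
  {X : Set (ℤ → A)}

lemma gfunction_of_W (hX : IsSubshift X) {n : ℕ} (hn : 1 ≤ n)
    (hW : ∀ b : List A, b.length = n → Admissible X b → (omega1 X b).Nonempty) :
    ∃ g : (ℕ → A) → A → ℝ, IsGFunction X g := by
  classical
  set F : (Fin n → A) → A := fun β =>
    if h : (omega1 X (List.ofFn β)).Nonempty then h.choose else Classical.arbitrary A with hF
  set blk : (ℕ → A) → Fin n → A := fun u j => u (n - 1 - (j:ℕ)) with hblk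
  have key : ∀ u ∈ Xminus X, F (blk u) ∈ Gamma1 X u := by
    rintro u ⟨x, hx, hux⟩
    have hblen : (List.ofFn (blk u)).length = n := by simp
    have hxb : EndsAtZero x (List.ofFn (blk u)) := by
      intro j
      rw [List.get_ofFn]
      simp only [hblk, List.length_ofFn, Fin.coe_cast]
      have hj : (j : ℕ) < n := by have := j.2; simpa using this
      rw [hux (n - 1 - (j:ℕ))]
      congr 1
      omega
    have hbadm : Admissible X (List.ofFn (blk u)) := admissible_of_endsAtZero hx hxb
    have hne : (omega1 X (List.ofFn (blk u))).Nonempty := hW _ hblen hbadm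
    have hFval : F (blk u) ∈ omega1 X (List.ofFn (blk u)) := by
      simp only [hF]
      rw [dif_pos hne]; exact hne.choose_spec
    obtain ⟨x', hx', hagree, hone⟩ := hFval x hx hxb
    refine ⟨x', hx', fun m => ?_, ?_⟩
    · rw [hagree _ (by omega : -((m:ℕ):ℤ) ≤ 0), ← hux m]
    · have := hone ⟨0, by simp⟩
      simpa using this
  refine ⟨fun u σ => if σ = F (blk u) then 1 else 0, ?_, ?_, ?_⟩
  · apply Continuous.continuousOn
    have hcont : Continuous (fun p : (ℕ → A) × A => (blk p.1, p.2)) := by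
      exact Continuous.prodMk
        (continuous_pi fun j => (continuous_apply _).comp continuous_fst) continuous_snd
    exact (continuous_of_discreteTopology
      (f := fun q : (Fin n → A) × A => if q.2 = F q.1 then (1:ℝ) else 0)).comp hcont
  · intro u hu σ hσ
    by_cases h : σ = F (blk u) <;> simp [h]
  · intro u hu
    have hτ := key u hu
    have : (Gamma1 X u).indicator (fun σ => if σ = F (blk u) then (1:ℝ) else 0)
        = fun σ => if σ = F (blk u) then (1:ℝ) else 0 := by
      funext σ
      by_cases h : σ = F (blk u)
      · subst h; rw [Set.indicator_of_mem hτ]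
      · by_cases h2 : σ ∈ Gamma1 X u
        · rw [Set.indicator_of_mem h2]
        · rw [Set.indicator_of_notMem h2, if_neg h]
    rw [this]
    simp
end GCon

section Fwd
variable {A : Type*} [Fintype A] [Nonempty A] [TopologicalSpace A] [DiscreteTopology A]
  {X : Set (ℤ → A)}

lemma isCompact_X (hX : IsSubshift X) : IsCompact X := by
  have : CompactSpace (ℤ → A) := by infer_instance
  exact hX.2.1.isCompact

lemma isClosed_D (hX : IsSubshift X) :
    IsClosed {p : (ℕ → A) × A | p.1 ∈ Xminus X ∧ p.2 ∈ Gamma1 X p.1} := by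
  have hC : IsClosed {p : (ℤ → A) × A | p.1 ∈ X ∧ p.1 1 = p.2} := by
    exact (hX.2.1.preimage continuous_fst).inter
      (isClosed_eq ((continuous_apply (1:ℤ)).comp continuous_fst) continuous_snd)
  have hCcomp : IsCompact {p : (ℤ → A) × A | p.1 ∈ X ∧ p.1 1 = p.2} := hC.isCompact
  have hΦ : Continuous (fun p : (ℤ → A) × A => ((fun m : ℕ => p.1 (-(m:ℤ))), p.2)) := by
    exact Continuous.prodMk
      (continuous_pi fun m => (continuous_apply _).comp continuous_fst) continuous_snd
  have himg := (hCcomp.image hΦ).isClosed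
  have : (fun p : (ℤ → A) × A => ((fun m : ℕ => p.1 (-(m:ℤ))), p.2)) ''
      {p : (ℤ → A) × A | p.1 ∈ X ∧ p.1 1 = p.2}
      = {p : (ℕ → A) × A | p.1 ∈ Xminus X ∧ p.2 ∈ Gamma1 X p.1} := by
    ext ⟨u, σ⟩
    constructor
    · rintro ⟨⟨x, σ'⟩, ⟨hx, h1⟩, heq⟩
      rw [Prod.mk.injEq] at heq
      obtain ⟨hu, hσ⟩ := heq
      refine ⟨⟨x, hx, fun m => ?_⟩, ⟨x, hx, fun m => ?_, by rw [← hσ]; exact h1⟩⟩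
      · rw [← hu]
      · rw [← hu]
    · rintro ⟨⟨x, hx, hray⟩, ⟨x', hx', hray', h1⟩⟩
      refine ⟨(x', σ), ⟨hx', h1⟩, ?_⟩
      simp only [Prod.mk.injEq]
      exact ⟨funext fun m => hray' m, trivial⟩

  rwa [this] at himg

lemma exists_mass (hX : IsSubshift X) {g : (ℕ → A) → A → ℝ} (hg : IsGFunction X g)
    {u : ℕ → A} (hu : u ∈ Xminus X) :
    ∃ σ, σ ∈ Gamma1 X u ∧ 1 / (Fintype.card A : ℝ) ≤ g u σ := by
  by_contra hcon
  push_neg at hcon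
  have hcard : 0 < (Fintype.card A : ℝ) := by
    have := Fintype.card_pos (α := A); positivity
  have hlt : ∀ σ : A, (Gamma1 X u).indicator (g u) σ < 1 / (Fintype.card A : ℝ) := by
    intro σ
    by_cases h : σ ∈ Gamma1 X u
    · rw [Set.indicator_of_mem h]; exact hcon σ h
    · rw [Set.indicator_of_notMem h]; positivity
  have hsum := hg.2.2 u hu
  have : (1:ℝ) < 1 := by
    calc (1:ℝ) = ∑ σ : A, (Gamma1 X u).indicator (g u) σ := hsum.symm
    _ < ∑ _σ : A, 1 / (Fintype.card A : ℝ) :=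
        Finset.sum_lt_sum_of_nonempty Finset.univ_nonempty (fun σ _ => hlt σ)
    _ = 1 := by
        rw [Finset.sum_const, Finset.card_univ, nsmul_eq_mul]
        field_simp
  exact absurd this (lt_irrefl 1)

end Fwd

section Bad
variable {A : Type*} [Fintype A] [Nonempty A] [TopologicalSpace A] [DiscreteTopology A]
  {X : Set (ℤ → A)}

lemma exists_bad_u (hX : IsSubshift X)
    (hcon : ∀ n : ℕ, 1 ≤ n → ∃ b : List A, b.length = n ∧ Admissible X b ∧ omega1 X b = ∅) :
    ∃ x ∈ X, ∀ k : ℕ, omega1 X (lastWord (ray x) k) = ∅ := by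
  have h1 : ∀ m : ℕ, ∃ x, x ∈ X ∧ ∃ b : List A,
      b.length = m + 1 ∧ EndsAtZero x b ∧ omega1 X b = ∅ := by
    intro m
    obtain ⟨b, hlen, hadm, hemp⟩ := hcon (m+1) (by omega)
    obtain ⟨x, hx, hxe⟩ := endsAtZero_of_admissible hX hadm
    exact ⟨x, hx, b, hlen, hxe, hemp⟩
  choose xs hxs bs hlen hends hemp using h1
  have hmap : Filter.map xs atTop ≤ 𝓟 X := by
    rw [Filter.le_principal_iff, Filter.mem_map]
    exact Filter.Eventually.of_forall fun m => hxs m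
  obtain ⟨x, hxX, hclus⟩ := (isCompact_X hX).exists_clusterPt hmap
  refine ⟨x, hxX, fun k => ?_⟩
  have hVopen : IsOpen {z : ℤ → A | ∀ j : Fin (k+1), z (-((j:ℕ):ℤ)) = x (-((j:ℕ):ℤ))} := by
    have heq : {z : ℤ → A | ∀ j : Fin (k+1), z (-((j:ℕ):ℤ)) = x (-((j:ℕ):ℤ))}
        = ⋂ j : Fin (k+1), (fun z : ℤ → A => z (-((j:ℕ):ℤ))) ⁻¹' {x (-((j:ℕ):ℤ))} := by
      ext z; simp [Set.mem_iInter]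
    rw [heq]
    exact isOpen_iInter_of_finite fun j =>
      (isOpen_discrete _).preimage (continuous_apply _)
  have hV : {z : ℤ → A | ∀ j : Fin (k+1), z (-((j:ℕ):ℤ)) = x (-((j:ℕ):ℤ))} ∈ 𝓝 x :=
    hVopen.mem_nhds (fun j => rfl)
  have hW : xs '' (Set.Ici k) ∈ Filter.map xs atTop := by
    rw [Filter.mem_map]
    exact Filter.mem_of_superset (Filter.Ici_mem_atTop k) (fun m hm => ⟨m, hm, rfl⟩)
  obtain ⟨z, hzV, hzW⟩ := clusterPt_iff_nonempty.mp hclus hV hW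
  obtain ⟨m, hm, rfl⟩ := hzW
  have hsub : ∀ z' : ℤ → A, EndsAtZero z' (bs m) → EndsAtZero z' (lastWord (ray x) k) := by
    intro z' hz' j
    simp only [lastWord, List.get_ofFn, List.length_ofFn, Fin.coe_cast]
    have hj : (j : ℕ) < k + 1 := by
      have := j.2; simpa [lastWord] using this
    have hm' : k ≤ m := hm
    have hidx : m - k + (j:ℕ) < (bs m).length := by rw [hlen m]; omega
    have h2 := hz' ⟨m - k + (j:ℕ), hidx⟩
    have h3 := hends m ⟨m - k + (j:ℕ), hidx⟩
    have harg : ((m - k + (j:ℕ) : ℕ) : ℤ) - (((bs m).length : ℤ) - 1) = ((j:ℕ):ℤ) - (k:ℤ) := by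
      rw [hlen m]; push_cast; omega
    rw [harg] at h2 h3
    have h4 : z' (((j:ℕ):ℤ) - (k:ℤ)) = xs m (((j:ℕ):ℤ) - (k:ℤ)) := by rw [h2, h3]
    have h5 := hzV ⟨k - (j:ℕ), by omega⟩
    have harg2 : -(((k - (j:ℕ) : ℕ)):ℤ) = ((j:ℕ):ℤ) - (k:ℤ) := by push_cast; omega
    rw [harg2] at h5
    rw [show ((j:ℕ):ℤ) - ((((k+1:ℕ)):ℤ) - 1) = ((j:ℕ):ℤ) - (k:ℤ) by push_cast; ring, h4, h5]
    change x _ = (lastWord (ray x) k)[(j:ℕ)]'j.2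
    simp only [lastWord, List.getElem_ofFn]
    show x (((j:ℕ):ℤ) - (k:ℤ)) = x (-(((k - (j:ℕ) : ℕ)):ℤ))
    rw [harg2]
  have := omega1_antitone (X := X) hsub
  rw [hemp m] at this
  exact Set.subset_empty_iff.mp this

end Bad

section Main
variable {A : Type*} [Fintype A] [Nonempty A] [TopologicalSpace A] [DiscreteTopology A]
  {X : Set (ℤ → A)}

lemma no_gfunction_of_bad (hX : IsSubshift X) {g : (ℕ → A) → A → ℝ} (hg : IsGFunction X g)
    {x : ℤ → A} (hx : x ∈ X) (hbad : ∀ k : ℕ, omega1 X (lastWord (ray x) k) = ∅) :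
    False := by
  classical
  have hu : ray x ∈ Xminus X := ray_mem hx
  obtain ⟨σs, hσΓ, hσval⟩ := exists_mass hX hg hu
  have h2 : ∀ k : ℕ, ∃ z, z ∈ X ∧ EndsAtZero z (lastWord (ray x) k) ∧
      ¬ ∃ x', x' ∈ X ∧ (∀ i : ℤ, i ≤ 0 → x' i = z i) ∧
        (∀ j : Fin ([σs].length), x' (((j:ℕ):ℤ)+1) = [σs].get j) := by
    intro k
    by_contra hno
    push_neg at hno
    have hmem : σs ∉ omega1 X (lastWord (ray x) k) := by
      rw [hbad k]; exact Set.notMem_empty σs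
    apply hmem
    intro z hz hze
    obtain ⟨x', hx', hh⟩ := hno z hz hze
    exact ⟨x', hx', hh⟩
  choose zs hzX hzend hznot using h2
  have huk : ∀ k, ray (zs k) ∈ Xminus X := fun k => ray_mem (hzX k)
  have hσnot : ∀ k, σs ∉ Gamma1 X (ray (zs k)) := by
    rintro k ⟨x', hx', hray, h1⟩
    refine hznot k ⟨x', hx', fun i hi => ?_, fun j => ?_⟩
    · have hm : -((((-i).toNat : ℕ)) : ℤ) = i := by omega
      rw [← hm]
      exact hray _
    · have hj0 : (j : ℕ) = 0 := by have := j.2; simpa using this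
      rw [List.get_eq_getElem, List.getElem_singleton, hj0]
      show x' (((0:ℕ):ℤ) + 1) = σs
      norm_num
      exact h1
  have hagree : ∀ k m : ℕ, m ≤ k → ray (zs k) m = ray x m := by
    intro k m hm
    have h3 := hzend k ⟨k - m, by simp [lastWord]⟩
    simp only [lastWord, List.get_ofFn, List.length_ofFn, Fin.coe_cast] at h3
    rw [show ((k-m:ℕ):ℤ) - ((((k+1:ℕ)):ℤ) - 1) = -(m:ℤ) by push_cast; omega] at h3
    rw [show k - (k - m) = m by omega] at h3
    exact h3
  have htend : Filter.Tendsto (fun k => ray (zs k)) atTop (𝓝 (ray x)) := by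
    rw [tendsto_pi_nhds]
    intro m
    have hev : ∀ᶠ k in atTop, ray x m = ray (zs k) m :=
      Filter.eventually_atTop.mpr ⟨m, fun k hk => (hagree k m hk).symm⟩
    exact Filter.Tendsto.congr' hev tendsto_const_nhds
  obtain ⟨S, hSinf'⟩ := Finite.exists_infinite_fiber (fun k : ℕ => Gamma1 X (ray (zs k)))
  have hSinf : {k : ℕ | Gamma1 X (ray (zs k)) = S}.Infinite := by
    exact Set.infinite_coe_iff.mp hSinf'
  set F : Filter ℕ := atTop ⊓ Filter.principal {k : ℕ | Gamma1 X (ray (zs k)) = S} with hF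
  have hFne : F.NeBot := by
    rw [hF, ← Filter.frequently_iff_neBot]
    rw [Filter.frequently_atTop]
    intro a
    obtain ⟨b, hb, hab⟩ := hSinf.exists_gt a
    exact ⟨b, le_of_lt hab, hb⟩
  have hσsS : σs ∉ S := by
    obtain ⟨k, hk⟩ := hSinf.nonempty
    rw [← hk]
    exact hσnot k
  have hevs : ∀ᶠ k in F, Gamma1 X (ray (zs k)) = S := by
    rw [hF]
    exact Filter.eventually_inf_principal.mpr (Filter.Eventually.of_forall fun k hk => hk)
  have hkey : ∀ τ ∈ S, τ ∈ Gamma1 X (ray x) ∧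
      Filter.Tendsto (fun k => g (ray (zs k)) τ) F (𝓝 (g (ray x) τ)) := by
    intro τ hτ
    have htendF : Filter.Tendsto (fun k => (ray (zs k), τ)) F (𝓝 (ray x, τ)) :=
      (htend.mono_left inf_le_left).prodMk_nhds tendsto_const_nhds
    have hevD : ∀ᶠ k in F, (ray (zs k), τ) ∈
        {p : (ℕ → A) × A | p.1 ∈ Xminus X ∧ p.2 ∈ Gamma1 X p.1} := by
      refine hevs.mono fun k hk => ⟨huk k, ?_⟩
      rw [hk]; exact hτ
    have hmemD := (isClosed_D hX).mem_of_tendsto htendF hevD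
    refine ⟨hmemD.2, ?_⟩
    have hcw := hg.1 (ray x, τ) ⟨hu, hmemD.2⟩
    exact hcw.tendsto.comp (tendsto_nhdsWithin_iff.mpr ⟨htendF, hevD⟩)
  -- the sum over S tends to the sum at the limit
  have hsumlim : Filter.Tendsto (fun k => ∑ σ : A, S.indicator (g (ray (zs k))) σ) F
      (𝓝 (∑ σ : A, S.indicator (g (ray x)) σ)) := by
    apply tendsto_finset_sum
    intro σ _
    by_cases hσ : σ ∈ S
    · have h4 := (hkey σ hσ).2
      have e1 : (fun k => S.indicator (g (ray (zs k))) σ) = fun k => g (ray (zs k)) σ := by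
        funext k; rw [Set.indicator_of_mem hσ]
      rw [e1, Set.indicator_of_mem hσ]
      exact h4
    · have e1 : (fun k => S.indicator (g (ray (zs k))) σ) = fun _ => (0:ℝ) := by
        funext k; rw [Set.indicator_of_notMem hσ]
      rw [e1, Set.indicator_of_notMem hσ]
      exact tendsto_const_nhds
  have hsum1 : ∀ᶠ k in F, ∑ σ : A, S.indicator (g (ray (zs k))) σ = 1 := by
    refine hevs.mono fun k hk => ?_
    rw [← hk]
    exact hg.2.2 (ray (zs k)) (huk k)
  have hSsum : ∑ σ : A, S.indicator (g (ray x)) σ = 1 := by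
    haveI := hFne
    have t1 : Filter.Tendsto (fun _ : ℕ => (1:ℝ)) F (𝓝 (∑ σ : A, S.indicator (g (ray x)) σ)) :=
      Filter.Tendsto.congr' hsum1 hsumlim
    exact tendsto_nhds_unique t1 tendsto_const_nhds
  -- final contradiction
  have hone := hg.2.2 (ray x) hu
  have hge : ∑ σ : A, (Gamma1 X (ray x)).indicator (g (ray x)) σ ≥
      ∑ σ : A, (S.indicator (g (ray x)) σ +
        if σ = σs then 1 / (Fintype.card A : ℝ) else 0) := by
    apply Finset.sum_le_sum
    intro σ _
    by_cases hσ : σ = σs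
    · subst hσ
      rw [Set.indicator_of_notMem hσsS, if_pos rfl, zero_add,
        Set.indicator_of_mem hσΓ]
      exact hσval
    · rw [if_neg hσ, add_zero]
      by_cases hσS : σ ∈ S
      · rw [Set.indicator_of_mem hσS, Set.indicator_of_mem ((hkey σ hσS).1)]
      · rw [Set.indicator_of_notMem hσS]
        by_cases hσΓ' : σ ∈ Gamma1 X (ray x)
        · rw [Set.indicator_of_mem hσΓ']
          exact (hg.2.1 (ray x) hu σ hσΓ').1
        · rw [Set.indicator_of_notMem hσΓ']
  rw [Finset.sum_add_distrib, hSsum] at hge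
  rw [hone] at hge
  have hcard : 0 < (Fintype.card A : ℝ) := by
    have := Fintype.card_pos (α := A); positivity
  have : ∑ σ : A, (if σ = σs then 1 / (Fintype.card A : ℝ) else 0) =
      1 / (Fintype.card A : ℝ) := by
    simp
  rw [this] at hge
  have : (0:ℝ) < 1 / (Fintype.card A : ℝ) := by positivity
  linarith

end Main

/-- Proposition 4.1.  A subshift has a g-function if and only if one
of its `n`-block systems (`n ≥ 1`) is right instantaneous. -/
theorem stmt10 {A : Type*} [Fintype A] [Nonempty A] [TopologicalSpace A] [DiscreteTopology A]
    (X : Set (ℤ → A)) (hX : IsSubshift X) :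
    (∃ g : (ℕ → A) → A → ℝ, IsGFunction X g) ↔
      ∃ n : ℕ, 1 ≤ n ∧ RightInstantaneous (blockSystem X n) := by
  constructor
  · rintro ⟨g, hg⟩
    by_contra hcon
    push_neg at hcon
    have hcon2 : ∀ n : ℕ, 1 ≤ n →
        ∃ b : List A, b.length = n ∧ Admissible X b ∧ omega1 X b = ∅ := by
      intro n hn
      by_contra hb
      push_neg at hb
      exact hcon n hn (blockW_to_RI hX hn (fun b hbl hba => hb b hbl hba))
    obtain ⟨x, hxX, hbad⟩ := exists_bad_u hX hcon2
    exact no_gfunction_of_bad hX hg hxX hbad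
  · rintro ⟨n, hn, hRI⟩
    exact gfunction_of_W hX hn (RI_to_blockW hX hn hRI)
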